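/- (Corollary 5.) Let Z and H be finite alphabets, m ≥ 1, P a probability mass function on Z, and Q a learning kernel from Z^m to pmfs on H that is invariant under permutations of the training set. Let 𝐇(H) = −∑_{h : μ_H(h)>0} μ_H(h)·log μ_H(h) be the Shannon entropy (in nats) of the inferred hypothesis H, with μ_H its marginal pmf. Then the mutual affinity satisfies I_P(Z_trn, H) ≤ √(𝐇(H)/(2m)) ≤ √(log|H|/(2m)). -/

import Mathlib

/-- Total variation distance between two pmfs: `1 - ∑ min`. -/
noncomputable def tv {A : Type*} (p q : A → ℝ) : ℝ := 1 - ∑' a, min (p a) (q a)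

/-- `p` is a probability mass function: nonnegative and summing to `1`. -/
def IsPMF {A : Type*} (p : A → ℝ) : Prop := (∀ a, 0 ≤ p a) ∧ HasSum p 1

/-- Product pmf `P^{⊗m}` of `m` i.i.d. draws from `P`. -/
noncomputable def prodPMF {Z : Type*} (m : ℕ) (P : Z → ℝ) (S : Fin m → Z) : ℝ :=
  ∏ i, P (S i)

/-- Joint pmf of a uniformly drawn training example `Z_trn` and the inferred
hypothesis `H`: `μ(z,h) = ∑_S P^{⊗m}(S) · (1/m)∑_i 1{S_i = z} · Q(h|S)`. -/
noncomputable def jointZH {Z H : Type*} (m : ℕ) (P : Z → ℝ)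
    (Q : (Fin m → Z) → H → ℝ) (z : Z) (h : H) : ℝ :=
  haveI := Classical.decEq Z
  ∑' S : Fin m → Z,
    prodPMF m P S * ((1 / (m : ℝ)) * ∑ i, if S i = z then (1 : ℝ) else 0) * Q S h

/-- Marginal of `Z_trn` under the joint pmf `jointZH`. -/
noncomputable def margZ {Z H : Type*} (m : ℕ) (P : Z → ℝ)
    (Q : (Fin m → Z) → H → ℝ) (z : Z) : ℝ :=
  ∑' h : H, jointZH m P Q z h

/-- Marginal of the hypothesis `H` under the joint pmf `jointZH`. -/
noncomputable def margH {Z H : Type*} (m : ℕ) (P : Z → ℝ)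
    (Q : (Fin m → Z) → H → ℝ) (h : H) : ℝ :=
  ∑' z : Z, jointZH m P Q z h

/-- Mutual affinity `I(Z_trn, H) = ‖μ_Z ⊗ μ_H, μ‖`. -/
noncomputable def affinity {Z H : Type*} (m : ℕ) (P : Z → ℝ)
    (Q : (Fin m → Z) → H → ℝ) : ℝ :=
  tv (fun p : Z × H => margZ m P Q p.1 * margH m P Q p.2)
    (fun p : Z × H => jointZH m P Q p.1 p.2)

/-- True risk `R(𝓛) = ∑_S P^{⊗m}(S) ∑_h Q(h|S) ∑_z P(z)·L(h,z)`. -/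
noncomputable def trueRisk {Z H : Type*} (m : ℕ) (P : Z → ℝ)
    (Q : (Fin m → Z) → H → ℝ) (L : H → Z → ℝ) : ℝ :=
  ∑' S : Fin m → Z, prodPMF m P S * ∑' h : H, Q S h * ∑' z : Z, P z * L h z

/-- Empirical risk `R_emp(𝓛) = ∑_S P^{⊗m}(S) ∑_h Q(h|S)·(1/m)∑_i L(h,S_i)`. -/
noncomputable def empRisk {Z H : Type*} (m : ℕ) (P : Z → ℝ)
    (Q : (Fin m → Z) → H → ℝ) (L : H → Z → ℝ) : ℝ :=
  ∑' S : Fin m → Z, prodPMF m P S * ∑' h : H, Q S h * ((1 / (m : ℝ)) * ∑ i, L h (S i))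

/-- Learning capacity `C^(m)(𝓛) = sup_P I(Z_trn, H)`. -/
noncomputable def capacity {Z H : Type*} (m : ℕ)
    (Q : (Fin m → Z) → H → ℝ) : ℝ :=
  sSup {c : ℝ | ∃ P : Z → ℝ, IsPMF P ∧ c = affinity m P Q}



namespace Stmt16Aux
open Real Finset


/-- Pointwise Gibbs: `a - b ≤ a log(a/b)`. -/
lemma gibbs_pt {a b : ℝ} (ha : 0 ≤ a) (hb : 0 ≤ b) (hab : b = 0 → a = 0) :
    a - b ≤ a * Real.log (a / b) := by
  rcases eq_or_lt_of_le ha with h0 | ha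
  · simp [← h0, hb]
  · have hb' : 0 < b := by
      rcases eq_or_lt_of_le hb with h0 | h; · exact absurd (hab h0.symm) (by positivity)
      · exact h
    have h1 : Real.log (b / a) ≤ b / a - 1 := Real.log_le_sub_one_of_pos (by positivity)
    have h2 : Real.log (a / b) = - Real.log (b / a) := by
      rw [← Real.log_inv]; congr 1; field_simp
    nlinarith [mul_le_mul_of_nonneg_left h1 ha.le, mul_div_cancel₀ b ha.ne']

private lemma hasDerivAt_g {x : ℝ} (hx : 0 < x) :
    HasDerivAt (fun t : ℝ => (t + 1) * Real.log t - 2 * t + 2) (Real.log x + 1/x - 1) x := by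
  have h1 : HasDerivAt (fun t : ℝ => (t + 1) * Real.log t)
      (1 * Real.log x + (x + 1) * x⁻¹) x :=
    ((hasDerivAt_id x).add_const 1).mul (Real.hasDerivAt_log hx.ne')
  have h2 := (h1.sub ((hasDerivAt_id x).const_mul (2:ℝ))).add_const 2
  refine h2.congr_deriv ?_
  have : x * x⁻¹ = 1 := mul_inv_cancel₀ hx.ne'
  field_simp
  nlinarith [this]

private lemma hasDerivAt_f {x : ℝ} (hx : 0 < x) :
    HasDerivAt (fun t : ℝ => (2 * t + 4) * (t * Real.log t - t + 1) - 3 * (t - 1) ^ 2)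
      (4 * ((x + 1) * Real.log x - 2 * x + 2)) x := by
  have h1 : HasDerivAt (fun t : ℝ => t * Real.log t) (Real.log x + 1) x :=
    Real.hasDerivAt_mul_log hx.ne'
  have h2 : HasDerivAt (fun t : ℝ => t * Real.log t - t + 1) (Real.log x + 1 - 1) x :=
    (h1.sub (hasDerivAt_id x)).add_const 1
  have h3 : HasDerivAt (fun t : ℝ => 2 * t + 4) 2 x := by
    simpa using ((hasDerivAt_id x).const_mul (2:ℝ)).add_const 4
  have h4 : HasDerivAt (fun t : ℝ => 3 * (t - 1) ^ 2) (3 * (2 * (x - 1) ^ 1 * 1)) x :=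
    (((hasDerivAt_id x).sub_const 1).pow 2).const_mul 3
  have := (h3.mul h2).sub h4
  refine this.congr_deriv ?_
  ring

private lemma contOn_f : ContinuousOn
    (fun t : ℝ => (2 * t + 4) * (t * Real.log t - t + 1) - 3 * (t - 1) ^ 2) (Set.Icc 0 1) := by
  apply ContinuousOn.sub
  · exact (by fun_prop : Continuous fun t : ℝ => 2*t+4).continuousOn.mul
      (((Real.continuous_mul_log.sub continuous_id).add continuous_const).continuousOn)
  · fun_prop

/-- Pointwise Pinsker ingredient. -/
lemma pinsker_aux {t : ℝ} (ht : 0 ≤ t) :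
    3 * (t - 1) ^ 2 ≤ (2 * t + 4) * (t * Real.log t - t + 1) := by
  set f : ℝ → ℝ := fun t => (2 * t + 4) * (t * Real.log t - t + 1) - 3 * (t - 1) ^ 2 with hf
  set g : ℝ → ℝ := fun t => (t + 1) * Real.log t - 2 * t + 2 with hg
  have hgmono : MonotoneOn g (Set.Ioi (0:ℝ)) := by
    apply monotoneOn_of_deriv_nonneg (convex_Ioi 0)
    · intro x hx
      exact (hasDerivAt_g hx).continuousAt.continuousWithinAt
    · intro x hx
      rw [interior_Ioi] at hx
      exact (hasDerivAt_g hx).differentiableAt.differentiableWithinAt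
    · intro x hx
      rw [interior_Ioi] at hx
      rw [(hasDerivAt_g hx).deriv]
      have : 1 - 1/x ≤ Real.log x := by
        rw [one_div]; exact Real.one_sub_inv_le_log_of_pos hx
      linarith
  have hg1 : g 1 = 0 := by simp [hg]
  have hf1 : f 1 = 0 := by simp [hf]
  have hfderiv : ∀ x : ℝ, 0 < x → HasDerivAt f (4 * g x) x := fun x hx => hasDerivAt_f hx
  -- f is antitone on [0,1]
  have hfanti : AntitoneOn f (Set.Icc 0 1) := by
    apply antitoneOn_of_deriv_nonpos (convex_Icc 0 1) contOn_f
    · intro x hx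
      rw [interior_Icc] at hx
      exact (hfderiv x hx.1).differentiableAt.differentiableWithinAt
    · intro x hx
      rw [interior_Icc] at hx
      rw [(hfderiv x hx.1).deriv]
      have : g x ≤ g 1 := hgmono hx.1 (by norm_num) hx.2.le
      rw [hg1] at this
      linarith
  have hfmono : MonotoneOn f (Set.Ici 1) := by
    apply monotoneOn_of_deriv_nonneg (convex_Ici 1)
    · intro x hx
      exact (hfderiv x (by linarith [hx.out] : (0:ℝ) < x)).continuousAt.continuousWithinAt
    · intro x hx
      rw [interior_Ici] at hx
      exact (hfderiv x (by linarith [hx.out] : (0:ℝ) < x)).differentiableAt.differentiableWithinAt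
    · intro x hx
      rw [interior_Ici] at hx
      rw [(hfderiv x (by linarith [hx.out] : (0:ℝ) < x)).deriv]
      have : g 1 ≤ g x := hgmono (by norm_num) (by simp; linarith [hx.out]) hx.out.le
      rw [hg1] at this
      linarith
  have : 0 ≤ f t := by
    rcases le_total t 1 with h | h
    · have := hfanti (Set.mem_Icc.2 ⟨ht, h⟩) (Set.mem_Icc.2 ⟨zero_le_one, le_refl 1⟩) h
      rw [hf1] at this; exact this
    · have := hfmono (Set.mem_Ici.2 (le_refl 1)) (Set.mem_Ici.2 h) h
      rw [hf1] at this; exact this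
  simpa [hf] using this

/-- Scaled pointwise Pinsker. -/
lemma pinsker_pt {x y : ℝ} (hx : 0 ≤ x) (hy : 0 ≤ y) (hxy : y = 0 → x = 0) :
    3 * (x - y) ^ 2 ≤ (2 * x + 4 * y) * (x * Real.log (x / y) - x + y) := by
  rcases eq_or_lt_of_le hy with h0 | hy'
  · rw [hxy h0.symm, ← h0]; norm_num
  · obtain ⟨t, rfl⟩ : ∃ t, x = t * y := ⟨x / y, (div_mul_cancel₀ x hy'.ne').symm⟩
    have ht : 0 ≤ t := nonneg_of_mul_nonneg_right (by linarith [hx] : 0 ≤ y * t) hy'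
    rw [mul_div_assoc, div_self hy'.ne', mul_one]
    have key := mul_le_mul_of_nonneg_left (pinsker_aux ht) (sq_nonneg y)
    nlinarith [key]

lemma gibbs_sum {A : Type*} [Fintype A] (a b : A → ℝ) (ha : ∀ x, 0 ≤ a x)
    (hb : ∀ x, 0 ≤ b x) (hab : ∀ x, b x = 0 → a x = 0) :
    (∑ x, a x) - (∑ x, b x) ≤ ∑ x, a x * Real.log (a x / b x) := by
  rw [← Finset.sum_sub_distrib]
  exact Finset.sum_le_sum fun x _ => gibbs_pt (ha x) (hb x) (hab x)

/-- Pinsker's inequality for finite pmfs. -/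
lemma pinsker_sum {A : Type*} [Fintype A] (p q : A → ℝ) (hp : ∀ x, 0 ≤ p x)
    (hq : ∀ x, 0 ≤ q x) (hp1 : ∑ x, p x = 1) (hq1 : ∑ x, q x = 1)
    (hac : ∀ x, p x = 0 → q x = 0) :
    1 - ∑ x, min (p x) (q x) ≤ Real.sqrt ((∑ x, q x * Real.log (q x / p x)) / 2) := by
  classical
  set KL := ∑ x, q x * Real.log (q x / p x) with hKL
  have hKL0 : 0 ≤ KL := by
    have := gibbs_sum q p hq hp hac
    rw [hp1, hq1] at this; linarith
  have htv : 1 - ∑ x, min (p x) (q x) = (∑ x, |q x - p x|) / 2 := by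
    have hmin : ∀ x, min (p x) (q x) = (p x + q x - |q x - p x|) / 2 := by
      intro x
      rcases le_total (p x) (q x) with h | h
      · rw [min_eq_left h, abs_of_nonneg (by linarith)]; ring
      · rw [min_eq_right h, abs_of_nonpos (by linarith)]; ring
    rw [Finset.sum_congr rfl fun x _ => hmin x, ← Finset.sum_div,
      Finset.sum_sub_distrib, Finset.sum_add_distrib, hp1, hq1]
    ring
  set w : A → ℝ := fun x => (2 * q x + 4 * p x) / 3 with hw
  have hw0 : ∀ x, 0 ≤ w x := fun x => by
    have := hp x; have := hq x; simp only [hw]; positivity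
  set u : A → ℝ := fun x => if w x = 0 then 0 else |q x - p x| / Real.sqrt (w x) with hu
  have hwz : ∀ x, w x = 0 → q x = 0 ∧ p x = 0 := by
    intro x h
    have h' : (2 * q x + 4 * p x) / 3 = 0 := h
    constructor <;> nlinarith [hp x, hq x]
  have huv : ∀ x, u x * Real.sqrt (w x) = |q x - p x| := by
    intro x
    by_cases h : w x = 0
    · obtain ⟨h1, h2⟩ := hwz x h
      simp [hu, h, h1, h2]
    · have hwpos : 0 < w x := lt_of_le_of_ne (hw0 x) (Ne.symm h)
      simp only [hu, if_neg h]
      exact div_mul_cancel₀ _ (Real.sqrt_ne_zero'.mpr hwpos)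
  have hsw : ∑ x, Real.sqrt (w x) ^ 2 = 2 := by
    rw [Finset.sum_congr rfl fun x _ => Real.sq_sqrt (hw0 x)]
    simp only [hw]
    rw [← Finset.sum_div, Finset.sum_add_distrib, ← Finset.mul_sum, ← Finset.mul_sum, hp1, hq1]
    norm_num
  have hu2 : ∀ x, u x ^ 2 ≤ q x * Real.log (q x / p x) - q x + p x := by
    intro x
    by_cases h : w x = 0
    · obtain ⟨h1, h2⟩ := hwz x h
      simp [hu, h, h1, h2]
    · have hwpos : 0 < w x := lt_of_le_of_ne (hw0 x) (Ne.symm h)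
      have hux : u x ^ 2 = (q x - p x) ^ 2 / w x := by
        simp only [hu, if_neg h, div_pow, Real.sq_sqrt (hw0 x), sq_abs]
      rw [hux, div_le_iff₀ hwpos]
      have hpp := pinsker_pt (hq x) (hp x) (hac x)
      have hwx : w x = (2 * q x + 4 * p x) / 3 := rfl
      rw [hwx]
      nlinarith [hpp]
  have hsum_u2 : ∑ x, u x ^ 2 ≤ KL := by
    calc ∑ x, u x ^ 2 ≤ ∑ x, (q x * Real.log (q x / p x) - q x + p x) :=
          Finset.sum_le_sum fun x _ => hu2 x
      _ = KL := by
          rw [Finset.sum_add_distrib, Finset.sum_sub_distrib, hp1, hq1, hKL]; ring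
  have hCS := Finset.sum_mul_sq_le_sq_mul_sq Finset.univ u (fun x => Real.sqrt (w x))
  rw [Finset.sum_congr rfl fun x _ => huv x] at hCS
  have hT2 : (∑ x, |q x - p x|) ^ 2 ≤ 2 * KL := by
    calc (∑ x, |q x - p x|) ^ 2 ≤ (∑ x, u x ^ 2) * ∑ x, Real.sqrt (w x) ^ 2 := hCS
      _ = (∑ x, u x ^ 2) * 2 := by rw [hsw]
      _ ≤ KL * 2 := by apply mul_le_mul_of_nonneg_right hsum_u2; norm_num
      _ = 2 * KL := by ring
  rw [htv, Real.le_sqrt (by positivity) (div_nonneg hKL0 (by norm_num))]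
  nlinarith [hT2]

section plumbing

variable {Z H : Type*} [Fintype Z] [Fintype H] [DecidableEq Z]
variable {m : ℕ} {P : Z → ℝ} {Q : (Fin m → Z) → H → ℝ}

/-- Joint pmf of the `i`-th training example and the hypothesis. -/
noncomputable def muI (m : ℕ) (P : Z → ℝ) (Q : (Fin m → Z) → H → ℝ)
    (i : Fin m) (z : Z) (h : H) : ℝ :=
  ∑ S : Fin m → Z, prodPMF m P S * (if S i = z then 1 else 0) * Q S h

/-- Joint pmf of the full sample and hypothesis. -/
noncomputable def lamSH (m : ℕ) (P : Z → ℝ) (Q : (Fin m → Z) → H → ℝ)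
    (S : Fin m → Z) (h : H) : ℝ := prodPMF m P S * Q S h

/-- Marginal pmf of the hypothesis. -/
noncomputable def nuH (m : ℕ) (P : Z → ℝ) (Q : (Fin m → Z) → H → ℝ) (h : H) : ℝ :=
  ∑ S : Fin m → Z, prodPMF m P S * Q S h

lemma prodPMF_nonneg (hP0 : ∀ z, 0 ≤ P z) (S : Fin m → Z) : 0 ≤ prodPMF m P S :=
  Finset.prod_nonneg fun i _ => hP0 (S i)

lemma sum_prodPMF (hP1 : ∑ z, P z = 1) : ∑ S : Fin m → Z, prodPMF m P S = 1 := by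
  simp only [prodPMF]
  rw [(Fintype.prod_sum fun (_ : Fin m) (z : Z) => P z).symm]
  simp [hP1]

lemma marg_prodPMF (hP1 : ∑ z, P z = 1) (i : Fin m) (z : Z) :
    ∑ S : Fin m → Z, prodPMF m P S * (if S i = z then 1 else 0) = P z := by
  have h1 : ∀ S : Fin m → Z, prodPMF m P S * (if S i = z then (1:ℝ) else 0)
      = ∏ j, (P (S j) * if j = i then (if S j = z then (1:ℝ) else 0) else 1) := by
    intro S
    rw [Finset.prod_mul_distrib]
    congr 1
    simp
  rw [Finset.sum_congr rfl fun S _ => h1 S,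
    (Fintype.prod_sum fun (j : Fin m) (x : Z) =>
      P x * if j = i then (if x = z then (1:ℝ) else 0) else 1).symm]
  have h2 : ∀ j : Fin m, (∑ x, P x * if j = i then (if x = z then (1:ℝ) else 0) else 1)
      = if j = i then P z else 1 := by
    intro j
    by_cases hj : j = i
    · simp [hj, mul_ite, mul_one, mul_zero]
    · simp [hj, hP1]
  rw [Finset.prod_congr rfl fun j _ => h2 j]
  simp

lemma muI_exch (hperm : ∀ (S : Fin m → Z) (σ : Equiv.Perm (Fin m)), Q (S ∘ σ) = Q S)
    (i j : Fin m) (z : Z) (h : H) : muI m P Q i z h = muI m P Q j z h := by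
  classical
  set σ : Equiv.Perm (Fin m) := Equiv.swap i j with hσ
  set e : (Fin m → Z) ≃ (Fin m → Z) := Equiv.arrowCongr σ.symm (Equiv.refl Z) with he
  have key := Equiv.sum_comp e
    (fun S : Fin m → Z => prodPMF m P S * (if S j = z then (1:ℝ) else 0) * Q S h)
  have hes : ∀ S : Fin m → Z, e S = S ∘ σ := fun S => rfl
  have hterm : ∀ S : Fin m → Z,
      prodPMF m P (e S) * (if (e S) j = z then (1:ℝ) else 0) * Q (e S) h
      = prodPMF m P S * (if S i = z then (1:ℝ) else 0) * Q S h := by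
    intro S
    rw [hes S]
    have h1 : prodPMF m P (S ∘ σ) = prodPMF m P S := by
      simp only [prodPMF, Function.comp_apply]
      exact Equiv.prod_comp σ fun k => P (S k)
    have h2 : (S ∘ σ) j = S i := by
      simp [Function.comp_apply, hσ, Equiv.swap_apply_right]
    rw [h1, h2, hperm S σ]
  rw [muI, muI, ← key, Finset.sum_congr rfl fun S _ => hterm S]

set_option linter.unusedSectionVars false

lemma muI_nonneg (hP0 : ∀ z, 0 ≤ P z) (hQ0 : ∀ S h, 0 ≤ Q S h) (i : Fin m) (z : Z) (h : H) :
    0 ≤ muI m P Q i z h := by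
  apply Finset.sum_nonneg
  intro S _
  have := prodPMF_nonneg hP0 S
  have := hQ0 S h
  positivity

lemma jointZH_eq (hm : 1 ≤ m)
    (hperm : ∀ (S : Fin m → Z) (σ : Equiv.Perm (Fin m)), Q (S ∘ σ) = Q S)
    (z : Z) (h : H) :
    jointZH m P Q z h = muI m P Q ⟨0, hm⟩ z h := by
  have hm0 : (m : ℝ) ≠ 0 := Nat.cast_ne_zero.2 (by omega)
  rw [jointZH, tsum_fintype, Subsingleton.elim (Classical.decEq Z) ‹DecidableEq Z›]
  have h1 : ∀ S : Fin m → Z,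
      prodPMF m P S * ((1 / (m : ℝ)) * ∑ i, if S i = z then (1:ℝ) else 0) * Q S h
      = ∑ i, (1 / (m : ℝ)) * (prodPMF m P S * (if S i = z then (1:ℝ) else 0) * Q S h) := by
    intro S
    rw [Finset.mul_sum, Finset.mul_sum, Finset.sum_mul]
    exact Finset.sum_congr rfl fun i _ => by ring
  rw [Finset.sum_congr rfl fun S _ => h1 S, Finset.sum_comm]
  have h2 : ∀ i : Fin m,
      (∑ S : Fin m → Z, (1 / (m : ℝ)) * (prodPMF m P S * (if S i = z then (1:ℝ) else 0) * Q S h))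
      = (1 / (m : ℝ)) * muI m P Q ⟨0, hm⟩ z h := by
    intro i
    rw [← Finset.mul_sum]
    congr 1
    exact (muI_exch hperm i ⟨0, hm⟩ z h)
  rw [Finset.sum_congr rfl fun i _ => h2 i, Finset.sum_const, Finset.card_univ,
    Fintype.card_fin, nsmul_eq_mul]
  field_simp

lemma sum_z_muI (i : Fin m) (h : H) : ∑ z, muI m P Q i z h = nuH m P Q h := by
  simp only [muI, nuH]
  rw [Finset.sum_comm]
  apply Finset.sum_congr rfl
  intro S _
  simp [mul_ite, ite_mul, mul_zero, zero_mul, mul_one]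

lemma margH_eq (hm : 1 ≤ m)
    (hperm : ∀ (S : Fin m → Z) (σ : Equiv.Perm (Fin m)), Q (S ∘ σ) = Q S) (h : H) :
    margH m P Q h = nuH m P Q h := by
  rw [margH, tsum_fintype, Finset.sum_congr rfl fun z _ => jointZH_eq hm hperm z h,
    sum_z_muI]

lemma margZ_eq (hm : 1 ≤ m) (hP1 : ∑ z, P z = 1)
    (hQ1 : ∀ S, ∑ h, Q S h = 1)
    (hperm : ∀ (S : Fin m → Z) (σ : Equiv.Perm (Fin m)), Q (S ∘ σ) = Q S) (z : Z) :
    margZ m P Q z = P z := by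
  rw [margZ, tsum_fintype, Finset.sum_congr rfl fun h _ => jointZH_eq hm hperm z h]
  simp only [muI]
  rw [Finset.sum_comm]
  have : ∀ S : Fin m → Z,
      (∑ h, prodPMF m P S * (if S ⟨0, hm⟩ = z then (1:ℝ) else 0) * Q S h)
      = prodPMF m P S * (if S ⟨0, hm⟩ = z then (1:ℝ) else 0) := by
    intro S
    rw [← Finset.mul_sum, hQ1 S, mul_one]
  rw [Finset.sum_congr rfl fun S _ => this S, marg_prodPMF hP1]

lemma sum_nuH (hP1 : ∑ z, P z = 1) (hQ1 : ∀ S, ∑ h, Q S h = 1) :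
    ∑ h, nuH m P Q h = 1 := by
  simp only [nuH]
  rw [Finset.sum_comm]
  have : ∀ S : Fin m → Z, (∑ h, prodPMF m P S * Q S h) = prodPMF m P S := by
    intro S; rw [← Finset.mul_sum, hQ1 S, mul_one]
  rw [Finset.sum_congr rfl fun S _ => this S, sum_prodPMF hP1]

lemma nuH_nonneg (hP0 : ∀ z, 0 ≤ P z) (hQ0 : ∀ S h, 0 ≤ Q S h) (h : H) :
    0 ≤ nuH m P Q h :=
  Finset.sum_nonneg fun S _ => mul_nonneg (prodPMF_nonneg hP0 S) (hQ0 S h)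

lemma muI_le_P (hm : 1 ≤ m) (hP0 : ∀ z, 0 ≤ P z) (hP1 : ∑ z, P z = 1)
    (hQ0 : ∀ S h, 0 ≤ Q S h) (hQ1 : ∀ S, ∑ h, Q S h = 1) (i : Fin m) (z : Z) (h : H) :
    muI m P Q i z h ≤ P z := by
  rw [← marg_prodPMF hP1 i z]
  apply Finset.sum_le_sum
  intro S _
  have hQle : Q S h ≤ 1 := by
    rw [← hQ1 S]
    exact Finset.single_le_sum (fun h' _ => hQ0 S h') (Finset.mem_univ h)
  have h0 : (0:ℝ) ≤ prodPMF m P S * (if S i = z then (1:ℝ) else 0) := by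
    have := prodPMF_nonneg hP0 S; positivity
  calc prodPMF m P S * (if S i = z then (1:ℝ) else 0) * Q S h
      ≤ prodPMF m P S * (if S i = z then (1:ℝ) else 0) * 1 :=
        mul_le_mul_of_nonneg_left hQle h0
    _ = _ := by ring

lemma muI_le_nuH (hP0 : ∀ z, 0 ≤ P z) (hQ0 : ∀ S h, 0 ≤ Q S h) (i : Fin m) (z : Z) (h : H) :
    muI m P Q i z h ≤ nuH m P Q h := by
  apply Finset.sum_le_sum
  intro S _
  have h1 := prodPMF_nonneg hP0 S
  have h2 := hQ0 S h
  by_cases hz : S i = z <;> simp [hz] <;> positivity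

lemma lam_le_muI (hP0 : ∀ z, 0 ≤ P z) (hQ0 : ∀ S h, 0 ≤ Q S h)
    (i : Fin m) (S : Fin m → Z) (h : H) :
    lamSH m P Q S h ≤ muI m P Q i (S i) h := by
  have := Finset.single_le_sum
    (f := fun S' : Fin m → Z => prodPMF m P S' * (if S' i = S i then (1:ℝ) else 0) * Q S' h)
    (fun S' _ => by have := prodPMF_nonneg hP0 S'; have := hQ0 S' h; positivity)
    (Finset.mem_univ S)
  simpa [lamSH, muI] using this

lemma lam_le_nuH (hP0 : ∀ z, 0 ≤ P z) (hQ0 : ∀ S h, 0 ≤ Q S h) (S : Fin m → Z) (h : H) :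
    lamSH m P Q S h ≤ nuH m P Q h :=
  Finset.single_le_sum
    (f := fun S' : Fin m → Z => prodPMF m P S' * Q S' h)
    (fun S' _ => mul_nonneg (prodPMF_nonneg hP0 S') (hQ0 S' h)) (Finset.mem_univ S)

lemma sum_lam (hP1 : ∑ z, P z = 1) (hQ1 : ∀ S, ∑ h, Q S h = 1) :
    ∑ S : Fin m → Z, ∑ h, lamSH m P Q S h = 1 := by
  simp only [lamSH]
  have : ∀ S : Fin m → Z, (∑ h, prodPMF m P S * Q S h) = prodPMF m P S := by
    intro S; rw [← Finset.mul_sum, hQ1 S, mul_one]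
  rw [Finset.sum_congr rfl fun S _ => this S, sum_prodPMF hP1]

/-- Auxiliary: `rho`, an auxiliary pmf on `(S, h)` built from single-coordinate joints. -/
noncomputable def rho (m : ℕ) (P : Z → ℝ) (Q : (Fin m → Z) → H → ℝ) (i₀ : Fin m)
    (S : Fin m → Z) (h : H) : ℝ :=
  if nuH m P Q h = 0 then 0 else (∏ i, muI m P Q i₀ (S i) h) / nuH m P Q h ^ (m - 1)

lemma rho_nonneg (hP0 : ∀ z, 0 ≤ P z) (hQ0 : ∀ S h, 0 ≤ Q S h) (i₀ : Fin m)
    (S : Fin m → Z) (h : H) : 0 ≤ rho m P Q i₀ S h := by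
  rw [rho]
  by_cases hν : nuH m P Q h = 0
  · simp [hν]
  · rw [if_neg hν]
    apply div_nonneg
    · exact Finset.prod_nonneg fun i _ => muI_nonneg hP0 hQ0 i₀ (S i) h
    · exact pow_nonneg (nuH_nonneg hP0 hQ0 h) _

lemma sum_rho (hm : 1 ≤ m) (hP0 : ∀ z, 0 ≤ P z) (hP1 : ∑ z, P z = 1)
    (hQ0 : ∀ S h, 0 ≤ Q S h) (hQ1 : ∀ S, ∑ h, Q S h = 1) (i₀ : Fin m) :
    ∑ S : Fin m → Z, ∑ h, rho m P Q i₀ S h = 1 := by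
  rw [Finset.sum_comm]
  have hh : ∀ h : H, (∑ S : Fin m → Z, rho m P Q i₀ S h)
      = if nuH m P Q h = 0 then 0 else nuH m P Q h := by
    intro h
    by_cases hν : nuH m P Q h = 0
    · simp [rho, hν]
    · simp only [rho, if_neg hν]
      rw [← Finset.sum_div]
      rw [(Fintype.prod_sum fun (_ : Fin m) (z : Z) => muI m P Q i₀ z h).symm]
      rw [Finset.prod_congr rfl fun i _ => sum_z_muI i₀ h]
      rw [Finset.prod_const, Finset.card_univ, Fintype.card_fin]
      rw [div_eq_iff (pow_ne_zero _ hν), ← pow_succ']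
      congr 1
      omega
  rw [Finset.sum_congr rfl fun h _ => hh h]
  rw [Finset.sum_congr rfl fun h _ => (by split <;> simp_all :
    (if nuH m P Q h = 0 then (0:ℝ) else nuH m P Q h) = nuH m P Q h)]
  exact sum_nuH hP1 hQ1

lemma prodPMF_pos_of_ne (hP0 : ∀ z, 0 ≤ P z) {S : Fin m → Z}
    (hpm : prodPMF m P S ≠ 0) (i : Fin m) : 0 < P (S i) := by
  rcases (hP0 (S i)).lt_or_eq with h | h
  · exact h
  · exfalso; apply hpm
    rw [prodPMF]
    exact Finset.prod_eq_zero (Finset.mem_univ i) h.symm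

/-- `KL(μ_{S,H} ‖ P^{⊗m} ⊗ ν) ≤ H(ν)`. -/
lemma KLS_le_ent (hP0 : ∀ z, 0 ≤ P z) (hQ0 : ∀ S h, 0 ≤ Q S h)
    (hQ1 : ∀ S, ∑ h, Q S h = 1) :
    ∑ S : Fin m → Z, ∑ h, lamSH m P Q S h *
        Real.log (lamSH m P Q S h / (prodPMF m P S * nuH m P Q h))
      ≤ -∑ h, nuH m P Q h * Real.log (nuH m P Q h) := by
  have key : ∀ (S : Fin m → Z) (h : H),
      lamSH m P Q S h * Real.log (lamSH m P Q S h / (prodPMF m P S * nuH m P Q h))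
      ≤ -(lamSH m P Q S h * Real.log (nuH m P Q h)) := by
    intro S h
    have hlam0 : 0 ≤ lamSH m P Q S h := mul_nonneg (prodPMF_nonneg hP0 S) (hQ0 S h)
    rcases hlam0.lt_or_eq with hlam | hlam
    · have hpm : 0 < prodPMF m P S := by
        rcases (prodPMF_nonneg hP0 S).lt_or_eq with h' | h'
        · exact h'
        · exfalso; rw [lamSH, ← h', zero_mul] at hlam; exact lt_irrefl _ hlam
      have hν : 0 < nuH m P Q h := lt_of_lt_of_le hlam (lam_le_nuH hP0 hQ0 S h)
      have hQle : Q S h ≤ 1 := by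
        rw [← hQ1 S]
        exact Finset.single_le_sum (fun h' _ => hQ0 S h') (Finset.mem_univ h)
      have hle : lamSH m P Q S h ≤ prodPMF m P S := by
        rw [lamSH]
        exact mul_le_of_le_one_right hpm.le hQle
      have hlog : Real.log (lamSH m P Q S h / (prodPMF m P S * nuH m P Q h))
          = Real.log (lamSH m P Q S h) - Real.log (prodPMF m P S) - Real.log (nuH m P Q h) := by
        rw [Real.log_div hlam.ne' (by positivity), Real.log_mul hpm.ne' hν.ne']
        ring
      rw [hlog]
      have h2 : Real.log (lamSH m P Q S h) ≤ Real.log (prodPMF m P S) :=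
        Real.log_le_log hlam hle
      nlinarith [mul_le_mul_of_nonneg_left h2 hlam.le]
    · rw [← hlam]; simp
  calc ∑ S : Fin m → Z, ∑ h, lamSH m P Q S h *
        Real.log (lamSH m P Q S h / (prodPMF m P S * nuH m P Q h))
      ≤ ∑ S : Fin m → Z, ∑ h, -(lamSH m P Q S h * Real.log (nuH m P Q h)) :=
        Finset.sum_le_sum fun S _ => Finset.sum_le_sum fun h _ => key S h
    _ = -∑ h, nuH m P Q h * Real.log (nuH m P Q h) := by
        rw [Finset.sum_comm]
        have hh : ∀ h : H, ∑ S : Fin m → Z, -(lamSH m P Q S h * Real.log (nuH m P Q h))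
            = -(nuH m P Q h * Real.log (nuH m P Q h)) := by
          intro h
          have hs : ∑ S : Fin m → Z, lamSH m P Q S h = nuH m P Q h := rfl
          rw [Finset.sum_neg_distrib, ← Finset.sum_mul, hs]
        rw [Finset.sum_congr rfl fun h _ => hh h, Finset.sum_neg_distrib]

lemma m_KL1_eq (hperm : ∀ (S : Fin m → Z) (σ : Equiv.Perm (Fin m)), Q (S ∘ σ) = Q S)
    (i₀ : Fin m) :
    (m : ℝ) * (∑ z, ∑ h, muI m P Q i₀ z h *
        Real.log (muI m P Q i₀ z h / (P z * nuH m P Q h)))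
    = ∑ S : Fin m → Z, ∑ h, lamSH m P Q S h *
        ∑ i, Real.log (muI m P Q i₀ (S i) h / (P (S i) * nuH m P Q h)) := by
  set c : Z → H → ℝ := fun z h => Real.log (muI m P Q i₀ z h / (P z * nuH m P Q h)) with hc
  have h1 : ∀ (S : Fin m → Z) (h : H),
      lamSH m P Q S h * ∑ i, c (S i) h = ∑ i, lamSH m P Q S h * c (S i) h :=
    fun S h => Finset.mul_sum _ _ _
  have hA : (∑ S : Fin m → Z, ∑ h : H, ∑ i : Fin m, lamSH m P Q S h * c (S i) h)
      = ∑ i : Fin m, ∑ S : Fin m → Z, ∑ h : H, lamSH m P Q S h * c (S i) h := by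
    have h6 : ∀ S : Fin m → Z, (∑ h : H, ∑ i : Fin m, lamSH m P Q S h * c (S i) h)
        = ∑ i : Fin m, ∑ h : H, lamSH m P Q S h * c (S i) h := fun S => Finset.sum_comm
    rw [Finset.sum_congr rfl fun S _ => h6 S]
    exact Finset.sum_comm
  rw [Finset.sum_congr rfl fun S _ => Finset.sum_congr rfl fun h _ => h1 S h, hA]
  have h2 : ∀ i : Fin m, (∑ i_1 : Fin m → Z, ∑ h : H, lamSH m P Q i_1 h * c (i_1 i) h)
      = ∑ z, ∑ h, muI m P Q i₀ z h * c z h := by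
    intro i
    rw [Finset.sum_comm]
    have h3 : ∀ h : H, (∑ S : Fin m → Z, lamSH m P Q S h * c (S i) h)
        = ∑ z, muI m P Q i z h * c z h := by
      intro h
      have h4 : ∀ S : Fin m → Z, lamSH m P Q S h * c (S i) h
          = ∑ z, prodPMF m P S * (if S i = z then (1:ℝ) else 0) * Q S h * c z h := by
        intro S
        rw [Finset.sum_eq_single (S i)]
        · simp [lamSH]
        · intro z _ hz
          simp [Ne.symm hz]
        · intro hz
          exact absurd (Finset.mem_univ (S i)) hz
      rw [Finset.sum_congr rfl fun S _ => h4 S, Finset.sum_comm]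
      apply Finset.sum_congr rfl
      intro z _
      rw [muI, Finset.sum_mul]
    rw [Finset.sum_congr rfl fun h _ => h3 h, Finset.sum_comm]
    apply Finset.sum_congr rfl
    intro z _
    apply Finset.sum_congr rfl
    intro h _
    rw [muI_exch hperm i i₀]
  rw [Finset.sum_congr rfl fun i _ => h2 i, Finset.sum_const, Finset.card_univ,
    Fintype.card_fin, nsmul_eq_mul]

set_option maxHeartbeats 800000 in
lemma m_KL1_le_KLS (hm : 1 ≤ m) (hP0 : ∀ z, 0 ≤ P z) (hP1 : ∑ z, P z = 1)
    (hQ0 : ∀ S h, 0 ≤ Q S h) (hQ1 : ∀ S, ∑ h, Q S h = 1)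
    (hperm : ∀ (S : Fin m → Z) (σ : Equiv.Perm (Fin m)), Q (S ∘ σ) = Q S)
    (i₀ : Fin m) :
    (m : ℝ) * (∑ z, ∑ h, muI m P Q i₀ z h *
        Real.log (muI m P Q i₀ z h / (P z * nuH m P Q h)))
    ≤ ∑ S : Fin m → Z, ∑ h, lamSH m P Q S h *
        Real.log (lamSH m P Q S h / (prodPMF m P S * nuH m P Q h)) := by
  rw [m_KL1_eq hperm i₀]
  have key : ∀ (S : Fin m → Z) (h : H),
      lamSH m P Q S h * ∑ i, Real.log (muI m P Q i₀ (S i) h / (P (S i) * nuH m P Q h))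
      ≤ lamSH m P Q S h * Real.log (lamSH m P Q S h / (prodPMF m P S * nuH m P Q h))
        - lamSH m P Q S h + rho m P Q i₀ S h := by
    intro S h
    have hlam0 : 0 ≤ lamSH m P Q S h := mul_nonneg (prodPMF_nonneg hP0 S) (hQ0 S h)
    rcases hlam0.lt_or_eq with hlam | hlam
    · -- positive case
      have hpm : 0 < prodPMF m P S := by
        rcases (prodPMF_nonneg hP0 S).lt_or_eq with h' | h'
        · exact h'
        · exfalso; rw [lamSH, ← h', zero_mul] at hlam; exact lt_irrefl _ hlam
      have hν : 0 < nuH m P Q h := lt_of_lt_of_le hlam (lam_le_nuH hP0 hQ0 S h)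
      have hPi : ∀ i : Fin m, 0 < P (S i) := prodPMF_pos_of_ne hP0 hpm.ne'
      have hmuI : ∀ i : Fin m, 0 < muI m P Q i₀ (S i) h := by
        intro i
        calc (0:ℝ) < lamSH m P Q S h := hlam
          _ ≤ muI m P Q i (S i) h := lam_le_muI hP0 hQ0 i S h
          _ = muI m P Q i₀ (S i) h := muI_exch hperm i i₀ (S i) h
      have hprodmu : 0 < ∏ i, muI m P Q i₀ (S i) h :=
        Finset.prod_pos fun i _ => hmuI i
      have hrho : 0 < rho m P Q i₀ S h := by
        rw [rho, if_neg hν.ne']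
        positivity
      -- logarithmic identities
      have e1 : ∀ i : Fin m, Real.log (muI m P Q i₀ (S i) h / (P (S i) * nuH m P Q h))
          = Real.log (muI m P Q i₀ (S i) h) - Real.log (P (S i)) - Real.log (nuH m P Q h) := by
        intro i
        rw [Real.log_div (hmuI i).ne' (mul_ne_zero (hPi i).ne' hν.ne'),
          Real.log_mul (hPi i).ne' hν.ne']
        ring
      have sumc : (∑ i, Real.log (muI m P Q i₀ (S i) h / (P (S i) * nuH m P Q h)))
          = Real.log (∏ i, muI m P Q i₀ (S i) h) - Real.log (prodPMF m P S)
            - (m : ℝ) * Real.log (nuH m P Q h) := by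
        rw [Finset.sum_congr rfl fun i _ => e1 i, Finset.sum_sub_distrib,
          Finset.sum_sub_distrib, Finset.sum_const, Finset.card_univ, Fintype.card_fin,
          nsmul_eq_mul,
          Real.log_prod (fun i _ => (hmuI i).ne'), prodPMF,
          Real.log_prod (fun i _ => (hPi i).ne')]
      have e2 : Real.log (lamSH m P Q S h / (prodPMF m P S * nuH m P Q h))
          = Real.log (lamSH m P Q S h) - Real.log (prodPMF m P S)
            - Real.log (nuH m P Q h) := by
        rw [Real.log_div hlam.ne' (mul_ne_zero hpm.ne' hν.ne'),
          Real.log_mul hpm.ne' hν.ne']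
        ring
      have e3 : Real.log (lamSH m P Q S h / rho m P Q i₀ S h)
          = Real.log (lamSH m P Q S h) - Real.log (∏ i, muI m P Q i₀ (S i) h)
            + ((m : ℝ) - 1) * Real.log (nuH m P Q h) := by
        rw [rho, if_neg hν.ne',
          Real.log_div hlam.ne' (div_ne_zero hprodmu.ne' (pow_ne_zero _ hν.ne')),
          Real.log_div hprodmu.ne' (pow_ne_zero _ hν.ne'),
          Real.log_pow]
        have : ((m - 1 : ℕ) : ℝ) = (m : ℝ) - 1 := by
          rw [Nat.cast_sub hm]; norm_num
        rw [this]
        ring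
      have hsum : lamSH m P Q S h * ∑ i, Real.log (muI m P Q i₀ (S i) h / (P (S i) * nuH m P Q h))
          = lamSH m P Q S h * Real.log (lamSH m P Q S h / (prodPMF m P S * nuH m P Q h))
            - lamSH m P Q S h * Real.log (lamSH m P Q S h / rho m P Q i₀ S h) := by
        rw [sumc, e2, e3]
        ring
      rw [hsum]
      have hg := gibbs_pt hlam.le hrho.le (fun hr => absurd hr hrho.ne')
      linarith
    · rw [← hlam]
      simp only [zero_mul, sub_zero, zero_sub, neg_add_le_iff_le_add]
      have := rho_nonneg hP0 hQ0 i₀ S h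
      linarith
  calc ∑ S : Fin m → Z, ∑ h, lamSH m P Q S h *
        ∑ i, Real.log (muI m P Q i₀ (S i) h / (P (S i) * nuH m P Q h))
      ≤ ∑ S : Fin m → Z, ∑ h, (lamSH m P Q S h *
          Real.log (lamSH m P Q S h / (prodPMF m P S * nuH m P Q h))
          - lamSH m P Q S h + rho m P Q i₀ S h) :=
        Finset.sum_le_sum fun S _ => Finset.sum_le_sum fun h _ => key S h
    _ = (∑ S : Fin m → Z, ∑ h, lamSH m P Q S h *
          Real.log (lamSH m P Q S h / (prodPMF m P S * nuH m P Q h)))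
          - (∑ S : Fin m → Z, ∑ h, lamSH m P Q S h)
          + ∑ S : Fin m → Z, ∑ h, rho m P Q i₀ S h := by
        simp only [Finset.sum_add_distrib, Finset.sum_sub_distrib]
    _ = _ := by
        rw [sum_lam hP1 hQ1, sum_rho hm hP0 hP1 hQ0 hQ1 i₀]
        ring

lemma ent_le_log {ν : H → ℝ} (hν0 : ∀ h, 0 ≤ ν h) (hν1 : ∑ h, ν h = 1) :
    -∑ h, ν h * Real.log (ν h) ≤ Real.log (Fintype.card H) := by
  have hne : Nonempty H := by
    by_contra hH
    rw [not_nonempty_iff] at hH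
    rw [Finset.univ_eq_empty, Finset.sum_empty] at hν1
    norm_num at hν1
  have hn : (0:ℝ) < (Fintype.card H : ℝ) := by
    exact_mod_cast Fintype.card_pos
  have hg := gibbs_sum ν (fun _ => 1 / (Fintype.card H : ℝ)) hν0
    (fun _ => by positivity) (fun x hx => absurd hx (by positivity))
  have hsum : ∑ _h : H, (1:ℝ) / (Fintype.card H : ℝ) = 1 := by
    rw [Finset.sum_const, Finset.card_univ, nsmul_eq_mul]
    field_simp
  have hterm : ∀ h, ν h * Real.log (ν h / (1 / (Fintype.card H : ℝ)))
      = ν h * Real.log (ν h) + ν h * Real.log (Fintype.card H : ℝ) := by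
    intro h
    rcases (hν0 h).lt_or_eq with hp | hp
    · rw [div_div_eq_mul_div, div_one, Real.log_mul hp.ne' hn.ne']
      ring
    · rw [← hp]; simp
  rw [hν1, hsum, Finset.sum_congr rfl fun h _ => hterm h, Finset.sum_add_distrib,
    ← Finset.sum_mul, hν1] at hg
  linarith
end plumbing

end Stmt16Aux

open Stmt16Aux in
/-- Corollary 5: for a permutation-invariant learning machine on
finite alphabets, the mutual affinity is bounded by `√(𝐇(H)/(2m))`, which in
turn is at most `√(log|H|/(2m))`, where `𝐇(H)` is the Shannon entropy (in
nats) of the inferred hypothesis. -/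
theorem stmt16 {Z H : Type*} [Fintype Z] [Fintype H] (m : ℕ) (hm : 1 ≤ m)
    (P : Z → ℝ) (hP : IsPMF P)
    (Q : (Fin m → Z) → H → ℝ) (hQ : ∀ S, IsPMF (Q S))
    (hperm : ∀ (S : Fin m → Z) (σ : Equiv.Perm (Fin m)), Q (S ∘ σ) = Q S)
    (νH : H → ℝ) (hνH : ∀ h, νH h = ∑' S : Fin m → Z, prodPMF m P S * Q S h)
    (ent : ℝ)
    (hent : ent = -∑' h : H, if 0 < νH h then νH h * Real.log (νH h) else 0) :
    affinity m P Q ≤ Real.sqrt (ent / (2 * m)) ∧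
      Real.sqrt (ent / (2 * m)) ≤
        Real.sqrt (Real.log (Fintype.card H) / (2 * m)) := by
  letI : DecidableEq Z := Classical.decEq Z
  obtain ⟨hP0, hPsum⟩ := hP
  have hP1 : ∑ z, P z = 1 := (hasSum_fintype P).unique hPsum
  have hQ0 : ∀ S h, 0 ≤ Q S h := fun S => (hQ S).1
  have hQ1 : ∀ S, ∑ h, Q S h = 1 := fun S => (hasSum_fintype (Q S)).unique (hQ S).2
  set i₀ : Fin m := ⟨0, hm⟩ with hi₀
  have hν : ∀ h, νH h = nuH m P Q h := fun h => by
    rw [hνH h, tsum_fintype]; rfl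
  have hν0 : ∀ h, 0 ≤ nuH m P Q h := nuH_nonneg hP0 hQ0
  have hνsum : ∑ h, nuH m P Q h = 1 := sum_nuH hP1 hQ1
  have hent' : ent = -∑ h, nuH m P Q h * Real.log (nuH m P Q h) := by
    rw [hent, tsum_fintype]
    congr 1
    apply Finset.sum_congr rfl
    intro h _
    rw [hν h]
    by_cases hp : 0 < nuH m P Q h
    · rw [if_pos hp]
    · have h0 : nuH m P Q h = 0 := le_antisymm (not_lt.1 hp) (hν0 h)
      rw [if_neg hp, h0]
      simp
  set pfun : Z × H → ℝ := fun p => P p.1 * nuH m P Q p.2 with hpfun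
  set qfun : Z × H → ℝ := fun p => muI m P Q i₀ p.1 p.2 with hqfun
  have hp0 : ∀ x, 0 ≤ pfun x := fun x => mul_nonneg (hP0 x.1) (hν0 x.2)
  have hq0 : ∀ x, 0 ≤ qfun x := fun x => muI_nonneg hP0 hQ0 i₀ x.1 x.2
  have hp1 : ∑ x : Z × H, pfun x = 1 := by
    rw [Fintype.sum_prod_type]
    simp only [hpfun]
    rw [Finset.sum_congr rfl fun z _ => (Finset.mul_sum _ _ _).symm]
    rw [Finset.sum_congr rfl fun z (_ : z ∈ Finset.univ) => by rw [hνsum]]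
    simpa using hP1
  have hq1 : ∑ x : Z × H, qfun x = 1 := by
    rw [Fintype.sum_prod_type]
    simp only [hqfun]
    rw [Finset.sum_comm]
    rw [Finset.sum_congr rfl fun h _ => sum_z_muI i₀ h]
    exact hνsum
  have hac : ∀ x, pfun x = 0 → qfun x = 0 := by
    intro x hx
    rcases mul_eq_zero.1 hx with h' | h'
    · exact le_antisymm (h' ▸ muI_le_P hm hP0 hP1 hQ0 hQ1 i₀ x.1 x.2) (hq0 x)
    · exact le_antisymm (h' ▸ muI_le_nuH hP0 hQ0 i₀ x.1 x.2) (hq0 x)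
  have hpk := pinsker_sum pfun qfun hp0 hq0 hp1 hq1 hac
  have haff : affinity m P Q = 1 - ∑ x : Z × H, min (pfun x) (qfun x) := by
    have hmarg : (fun p : Z × H => margZ m P Q p.1 * margH m P Q p.2) = pfun :=
      funext fun p => by rw [margZ_eq hm hP1 hQ1 hperm, margH_eq hm hperm]
    have hjoint : (fun p : Z × H => jointZH m P Q p.1 p.2) = qfun :=
      funext fun p => jointZH_eq hm hperm p.1 p.2
    rw [affinity, hmarg, hjoint, tv, tsum_fintype]
  have hKLprod : ∑ x : Z × H, qfun x * Real.log (qfun x / pfun x)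
      = ∑ z, ∑ h, muI m P Q i₀ z h *
          Real.log (muI m P Q i₀ z h / (P z * nuH m P Q h)) := by
    rw [Fintype.sum_prod_type]
  have hchain : (m : ℝ) * (∑ z, ∑ h, muI m P Q i₀ z h *
      Real.log (muI m P Q i₀ z h / (P z * nuH m P Q h))) ≤ ent := by
    rw [hent']
    exact le_trans (m_KL1_le_KLS hm hP0 hP1 hQ0 hQ1 hperm i₀) (KLS_le_ent hP0 hQ0 hQ1)
  have hmpos : (0:ℝ) < (m:ℝ) := by exact_mod_cast (by omega : 0 < m)
  constructor
  · rw [haff]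
    refine le_trans hpk (Real.sqrt_le_sqrt ?_)
    rw [hKLprod]
    rw [div_le_div_iff₀ (by norm_num) (by positivity)]
    nlinarith [hchain]
  · apply Real.sqrt_le_sqrt
    have hle : ent ≤ Real.log (Fintype.card H) := by
      rw [hent']
      exact ent_le_log hν0 hνsum
    gcongr
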